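/- Let θ ~ χ²_1 and c > 0. Then Var[√(c + θ)] = c + 1 - 2·U(-1/2, 0, c/2)², where U is Tricomi's confluent hypergeometric function. -/

import Mathlib

open MeasureTheory Real Set

/-- Tricomi's confluent hypergeometric function `U(a,b,z)`, defined by its integral
representation for `a > 0` and extended via Kummer's relation
`U(a,b,z) = z^(1-b) U(a-b+1, 2-b, z)` otherwise. -/
noncomputable def tricomiU (a b z : ℝ) : ℝ :=
  if 0 < a then
    (Gamma a)⁻¹ * ∫ t in Ioi (0:ℝ), Real.exp (-(z * t)) * t ^ (a - 1) * (1 + t) ^ (b - a - 1)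
  else
    z ^ (1 - b) *
      ((Gamma (a - b + 1))⁻¹ *
        ∫ t in Ioi (0:ℝ), Real.exp (-(z * t)) * t ^ (a - b) * (1 + t) ^ (-a))

lemma aux_integrable {s : ℝ} (hs : -1 < s) :
    IntegrableOn (fun θ : ℝ => θ ^ s * Real.exp (-((1:ℝ)/2 * θ))) (Ioi 0) := by
  have h := integrableOn_rpow_mul_exp_neg_mul_rpow hs (by norm_num : (0:ℝ) < 1) (by norm_num : (0:ℝ) < 1/2)
  refine h.congr_fun (fun x hx => ?_) measurableSet_Ioi
  simp only [Real.rpow_one]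
  ring_nf

/-- If θ ~ χ²₁ and c > 0, then Var[√(c+θ)] = c + 1 - 2·U(-1/2,0,c/2)². -/
theorem chisq_sqrt_shift_var (c : ℝ) (hc : 0 < c) :
    (∫ θ in Ioi (0:ℝ), (c + θ) * ((2 * π * θ) ^ (-(1:ℝ)/2) * Real.exp (-θ/2))) -
      (∫ θ in Ioi (0:ℝ),
        Real.sqrt (c + θ) * ((2 * π * θ) ^ (-(1:ℝ)/2) * Real.exp (-θ/2))) ^ 2 =
      c + 1 - 2 * (tricomiU (-(1/2)) 0 (c/2)) ^ 2 := by
  have h2pi : (0:ℝ) < 2 * π := by positivity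
  have hs2 : (0:ℝ) < Real.sqrt 2 := Real.sqrt_pos.mpr (by norm_num)
  have hsp : (0:ℝ) < Real.sqrt π := Real.sqrt_pos.mpr pi_pos
  have hs2sq : Real.sqrt 2 * Real.sqrt 2 = 2 := Real.mul_self_sqrt (by norm_num)
  have hrpow : (2 * π) ^ (-(1:ℝ)/2) = (Real.sqrt 2 * Real.sqrt π)⁻¹ := by
    rw [show (-(1:ℝ)/2) = -(1/2) by norm_num, Real.rpow_neg h2pi.le,
      ← Real.sqrt_eq_rpow, Real.sqrt_mul (by norm_num)]
  -- first integral
  have h1 : (∫ θ in Ioi (0:ℝ), (c + θ) * ((2 * π * θ) ^ (-(1:ℝ)/2) * Real.exp (-θ/2)))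
      = c + 1 := by
    have heq : ∀ θ ∈ Ioi (0:ℝ),
        (c + θ) * ((2 * π * θ) ^ (-(1:ℝ)/2) * Real.exp (-θ/2))
          = (2*π) ^ (-(1:ℝ)/2) *
            (c * (θ ^ ((1:ℝ)/2 - 1) * Real.exp (-((1:ℝ)/2 * θ)))
              + θ ^ ((3:ℝ)/2 - 1) * Real.exp (-((1:ℝ)/2 * θ))) := by
      intro θ hθ
      have hθ0 : (0:ℝ) < θ := hθ
      rw [Real.mul_rpow h2pi.le hθ0.le]
      have e1 : θ ^ ((3:ℝ)/2 - 1) = θ * θ ^ ((1:ℝ)/2 - 1) := by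
        rw [← Real.rpow_one_add' hθ0.le (by norm_num)]
        norm_num
      rw [e1]
      have e2 : Real.exp (-θ/2) = Real.exp (-((1:ℝ)/2 * θ)) := by ring_nf
      rw [show (-(1:ℝ)/2) = (1:ℝ)/2 - 1 by norm_num] at *
      rw [e2]; ring
    rw [setIntegral_congr_fun measurableSet_Ioi heq, MeasureTheory.integral_const_mul,
      MeasureTheory.integral_add ((aux_integrable (by norm_num)).const_mul c)
        (aux_integrable (by norm_num)),
      MeasureTheory.integral_const_mul]
    have g1 : ∫ θ in Ioi (0:ℝ), θ ^ ((1:ℝ)/2 - 1) * Real.exp (-((1:ℝ)/2 * θ))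
        = (1 / ((1:ℝ)/2)) ^ ((1:ℝ)/2) * Gamma ((1:ℝ)/2) :=
      integral_rpow_mul_exp_neg_mul_Ioi (by norm_num) (by norm_num)
    have g2 : ∫ θ in Ioi (0:ℝ), θ ^ ((3:ℝ)/2 - 1) * Real.exp (-((1:ℝ)/2 * θ))
        = (1 / ((1:ℝ)/2)) ^ ((3:ℝ)/2) * Gamma ((3:ℝ)/2) :=
      integral_rpow_mul_exp_neg_mul_Ioi (by norm_num) (by norm_num)
    rw [g1, g2, hrpow]
    have hG12 : Gamma ((1:ℝ)/2) = Real.sqrt π := Real.Gamma_one_half_eq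
    have hG32 : Gamma ((3:ℝ)/2) = Real.sqrt π / 2 := by
      rw [show (3:ℝ)/2 = 1/2 + 1 by norm_num, Real.Gamma_add_one (by norm_num), hG12]
      ring
    have h2h : (1 / ((1:ℝ)/2)) = (2:ℝ) := by norm_num
    rw [h2h, hG12, hG32]
    have p1 : (2:ℝ) ^ ((1:ℝ)/2) = Real.sqrt 2 := (Real.sqrt_eq_rpow 2).symm
    have p2 : (2:ℝ) ^ ((3:ℝ)/2) = 2 * Real.sqrt 2 := by
      rw [show (3:ℝ)/2 = 1 + 1/2 by norm_num, Real.rpow_add (by norm_num), Real.rpow_one,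
        ← Real.sqrt_eq_rpow]
    rw [p1, p2]
    field_simp
  -- second integral
  have h2 : (∫ θ in Ioi (0:ℝ), Real.sqrt (c + θ) * ((2 * π * θ) ^ (-(1:ℝ)/2) * Real.exp (-θ/2)))
      = Real.sqrt 2 * tricomiU (-(1/2)) 0 (c/2) := by
    have key := integral_comp_mul_left_Ioi
      (fun θ => Real.sqrt (c + θ) * ((2 * π * θ) ^ (-(1:ℝ)/2) * Real.exp (-θ/2))) 0 hc
    rw [mul_zero] at key
    have key2 : (∫ θ in Ioi (0:ℝ), Real.sqrt (c + θ) * ((2 * π * θ) ^ (-(1:ℝ)/2) * Real.exp (-θ/2)))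
        = c * ∫ t in Ioi (0:ℝ),
            Real.sqrt (c + c * t) * ((2 * π * (c * t)) ^ (-(1:ℝ)/2) * Real.exp (-(c * t)/2)) := by
      rw [key, smul_eq_mul, ← mul_assoc, mul_inv_cancel₀ hc.ne', one_mul]
    rw [key2]
    have heq : ∀ t ∈ Ioi (0:ℝ),
        Real.sqrt (c + c * t) * ((2 * π * (c * t)) ^ (-(1:ℝ)/2) * Real.exp (-(c * t)/2))
          = (2 * π) ^ (-(1:ℝ)/2) *
            (Real.exp (-(c/2 * t)) * t ^ (-(1/2) - (0:ℝ)) * (1 + t) ^ (-(-(1/2)) : ℝ)) := by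
      intro t ht
      have ht0 : (0:ℝ) < t := ht
      have h1t : (0:ℝ) < 1 + t := by linarith
      have e1 : c + c * t = c * (1 + t) := by ring
      rw [e1, Real.sqrt_mul hc.le, show 2 * π * (c * t) = (2*π) * c * t by ring,
        Real.mul_rpow (by positivity) ht0.le, Real.mul_rpow h2pi.le hc.le,
        Real.sqrt_eq_rpow c, Real.sqrt_eq_rpow (1 + t)]
      have e2 : c ^ ((1:ℝ)/2) * c ^ (-(1:ℝ)/2) = 1 := by
        rw [← Real.rpow_add hc]; norm_num
      have e3 : Real.exp (-(c*t)/2) = Real.exp (-(c/2 * t)) := by ring_nf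
      have e4 : t ^ (-(1/2) - (0:ℝ)) = t ^ (-(1:ℝ)/2) := by norm_num
      have e5 : (1 + t) ^ (-(-(1/2)) : ℝ) = (1 + t) ^ ((1:ℝ)/2) := by norm_num
      rw [e3, e4, e5]
      calc c ^ ((1:ℝ)/2) * (1+t) ^ ((1:ℝ)/2) *
            ((2*π) ^ (-(1:ℝ)/2) * c ^ (-(1:ℝ)/2) * t ^ (-(1:ℝ)/2) * Real.exp (-(c/2*t)))
          = (c ^ ((1:ℝ)/2) * c ^ (-(1:ℝ)/2)) * ((2*π) ^ (-(1:ℝ)/2) *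
              (Real.exp (-(c/2*t)) * t ^ (-(1:ℝ)/2) * (1+t) ^ ((1:ℝ)/2))) := by ring
        _ = _ := by rw [e2]; ring
    rw [setIntegral_congr_fun measurableSet_Ioi heq, MeasureTheory.integral_const_mul]
    have hU : tricomiU (-(1/2)) 0 (c/2)
        = (c/2) * ((Real.sqrt π)⁻¹ *
            ∫ t in Ioi (0:ℝ), Real.exp (-(c/2 * t)) * t ^ (-(1/2) - (0:ℝ))
              * (1 + t) ^ (-(-(1/2)) : ℝ)) := by
      rw [tricomiU, if_neg (by norm_num)]
      rw [show (-(1/2) - 0 + 1 : ℝ) = 1/2 by norm_num, Real.Gamma_one_half_eq,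
        show ((1:ℝ) - 0) = 1 by norm_num, Real.rpow_one]
    rw [hU, hrpow]
    set J := ∫ t in Ioi (0:ℝ), Real.exp (-(c/2 * t)) * t ^ (-(1/2) - (0:ℝ))
        * (1 + t) ^ (-(-(1/2)) : ℝ) with hJ
    field_simp
    linear_combination (-J) * hs2sq
  rw [h1, h2, mul_pow, Real.sq_sqrt (by norm_num : (0:ℝ) ≤ 2)]
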